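/- Let G be a connected graph containing no induced subgraph isomorphic to K_{1,3} and no induced subgraph isomorphic to P_5 (the path on 5 vertices). If C is an induced cycle of G of length at least 4, then every vertex of G either lies on C or is adjacent to some vertex of C (i.e., C dominates G). -/

import Mathlib

open SimpleGraph
open Fin.CommRing

private lemma claw_aux {V : Type*} {G : SimpleGraph V}
    {x a b c : V} (dab : a ≠ b) (dac : a ≠ c) (dbc : b ≠ c)
    (hxa : G.Adj x a) (hxb : G.Adj x b) (hxc : G.Adj x c)
    (nab : ¬ G.Adj a b) (nac : ¬ G.Adj a c) (nbc : ¬ G.Adj b c) :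
    Nonempty (completeBipartiteGraph (Fin 1) (Fin 3) ↪g G) := by
  have hax := hxa.symm; have hbx := hxb.symm; have hcx := hxc.symm
  have nba : ¬ G.Adj b a := fun h => nab h.symm
  have nca : ¬ G.Adj c a := fun h => nac h.symm
  have ncb : ¬ G.Adj c b := fun h => nbc h.symm
  have dxa := hxa.ne; have dxb := hxb.ne; have dxc := hxc.ne
  refine ⟨⟨⟨Sum.elim (fun _ => x) ![a, b, c], ?_⟩, ?_⟩⟩
  · rintro (i | i) (j | j) h <;> simp only [Sum.elim_inl, Sum.elim_inr] at h
    · exact congrArg Sum.inl (Subsingleton.elim i j)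
    · fin_cases j <;> simp_all
    · fin_cases i <;> simp_all
    · fin_cases i <;> fin_cases j <;> simp_all
  · change ∀ {i j}, G.Adj (Sum.elim (fun _ => x) ![a, b, c] i)
      (Sum.elim (fun _ => x) ![a, b, c] j) ↔ _
    rintro (i | i) (j | j) <;>
      simp only [Function.Embedding.coeFn_mk, Sum.elim_inl, Sum.elim_inr,
        completeBipartiteGraph_adj, Sum.isLeft_inl, Sum.isRight_inl, Sum.isLeft_inr,
        Sum.isRight_inr]
    · simp
    · fin_cases j <;> simp_all
    · fin_cases i <;> simp_all
    · fin_cases i <;> fin_cases j <;> simp_all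

private lemma p5_aux {V : Type*} {G : SimpleGraph V}
    {v0 v1 v2 v3 v4 : V}
    (h01 : G.Adj v0 v1) (h12 : G.Adj v1 v2) (h23 : G.Adj v2 v3) (h34 : G.Adj v3 v4)
    (n02 : ¬ G.Adj v0 v2) (n03 : ¬ G.Adj v0 v3) (n04 : ¬ G.Adj v0 v4)
    (n13 : ¬ G.Adj v1 v3) (n14 : ¬ G.Adj v1 v4) (n24 : ¬ G.Adj v2 v4)
    (d02 : v0 ≠ v2) (d03 : v0 ≠ v3) (d04 : v0 ≠ v4)
    (d13 : v1 ≠ v3) (d14 : v1 ≠ v4) (d24 : v2 ≠ v4) :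
    Nonempty (pathGraph 5 ↪g G) := by
  have h10 := h01.symm; have h21 := h12.symm; have h32 := h23.symm; have h43 := h34.symm
  have n20 : ¬ G.Adj v2 v0 := fun h => n02 h.symm
  have n30 : ¬ G.Adj v3 v0 := fun h => n03 h.symm
  have n40 : ¬ G.Adj v4 v0 := fun h => n04 h.symm
  have n31 : ¬ G.Adj v3 v1 := fun h => n13 h.symm
  have n41 : ¬ G.Adj v4 v1 := fun h => n14 h.symm
  have n42 : ¬ G.Adj v4 v2 := fun h => n24 h.symm
  have d01 := h01.ne; have d12 := h12.ne; have d23 := h23.ne; have d34 := h34.ne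
  refine ⟨⟨⟨![v0, v1, v2, v3, v4], ?_⟩, ?_⟩⟩
  · intro i j h
    fin_cases i <;> fin_cases j <;> simp_all
  · change ∀ {i j}, G.Adj (![v0, v1, v2, v3, v4] i) (![v0, v1, v2, v3, v4] j) ↔ _
    intro i j
    fin_cases i <;> fin_cases j <;>
      simp_all [pathGraph_adj] <;> decide

/-- In a connected `{K_{1,3}, P_5}`-free graph, every induced cycle of length at
least 4 dominates the whole graph. -/
theorem induced_cycle_dominates {V : Type*} (G : SimpleGraph V) (hconn : G.Connected)
    (hclaw : ¬ Nonempty (completeBipartiteGraph (Fin 1) (Fin 3) ↪g G))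
    (hP5 : ¬ Nonempty (pathGraph 5 ↪g G))
    (n : ℕ) (hn : 4 ≤ n) (f : cycleGraph n ↪g G) :
    ∀ v : V, v ∈ Set.range f ∨ ∃ u ∈ Set.range f, G.Adj v u := by
  obtain ⟨m, rfl⟩ : ∃ m, n = m + 2 + 2 := ⟨n - 4, by omega⟩
  -- basic cycle facts
  have cadj : ∀ i : Fin (m+2+2), (cycleGraph (m+2+2)).Adj i (i+1) := by
    intro i; rw [cycleGraph_adj]; right; ring
  have cnon : ∀ i : Fin (m+2+2), ¬ (cycleGraph (m+2+2)).Adj i (i+2) := by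
    intro i h
    rw [cycleGraph_adj] at h
    rcases h with h | h
    · have h3 : (3 : Fin (m+2+2)) = 0 := by linear_combination -h
      exact (by omega : (3:ℕ) ≠ 0) (congrArg Fin.val h3)
    · rw [show i + 2 - i = 2 by ring] at h
      exact (by omega : (2:ℕ) ≠ 1) (congrArg Fin.val h)
  have cne : ∀ i : Fin (m+2+2), i + 2 ≠ i := by
    intro i h
    have h2 : (2 : Fin (m+2+2)) = 0 := by linear_combination h
    exact (by omega : (2:ℕ) ≠ 0) (congrArg Fin.val h2)
  have key : ∀ a b : V, G.Adj a b →
      (b ∈ Set.range ⇑f ∨ ∃ u ∈ Set.range ⇑f, G.Adj b u) →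
      (a ∈ Set.range ⇑f ∨ ∃ u ∈ Set.range ⇑f, G.Adj a u) := by
    intro a b hab hb
    by_contra ha
    push_neg at ha
    obtain ⟨har, hana⟩ := ha
    have hbr : b ∉ Set.range ⇑f := by
      rintro ⟨j, rfl⟩
      exact hana _ ⟨j, rfl⟩ hab
    obtain ⟨u, ⟨i, rfl⟩, hbu⟩ := hb.resolve_left hbr
    -- b is adjacent to no two cycle vertices that are nonadjacent on the cycle
    have factA : ∀ j k : Fin (m+2+2), G.Adj b (f j) → G.Adj b (f k) →
        j ≠ k → ¬ (cycleGraph (m+2+2)).Adj j k → False := by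
      intro j k hj hk hjk hnadj
      refine absurd (claw_aux ?_ ?_ ?_ hab.symm hj hk ?_ ?_ ?_) hclaw
      · exact fun h => har ⟨j, h.symm⟩
      · exact fun h => har ⟨k, h.symm⟩
      · exact fun h => hjk (f.injective h)
      · exact hana _ ⟨j, rfl⟩
      · exact hana _ ⟨k, rfl⟩
      · exact fun h => hnadj (f.map_rel_iff.mp h)
    -- if b is adjacent to a consecutive pair on the cycle, we get an induced P5
    have pair : ∀ j : Fin (m+2+2), G.Adj b (f j) → G.Adj b (f (j+1)) → False := by
      intro j hj hj1
      have e13 : j + 1 + 2 = j + 3 := by ring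
      have e12 : j + 1 + 1 = j + 2 := by ring
      have e23 : j + 2 + 1 = j + 3 := by ring
      have n2 : ¬ G.Adj b (f (j+2)) := fun h => factA j (j+2) hj h (cne j).symm (cnon j)
      have n3 : ¬ G.Adj b (f (j+3)) := by
        intro h
        refine factA (j+1) (j+3) hj1 h ?_ ?_
        · have := (cne (j+1)).symm; rwa [e13] at this
        · have := cnon (j+1); rwa [e13] at this
      have h23 : G.Adj (f (j+1)) (f (j+2)) := by
        have := cadj (j+1); rw [e12] at this; exact f.map_rel_iff.mpr this
      have h34 : G.Adj (f (j+2)) (f (j+3)) := by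
        have := cadj (j+2); rw [e23] at this; exact f.map_rel_iff.mpr this
      have n24 : ¬ G.Adj (f (j+1)) (f (j+3)) := by
        intro h
        have := cnon (j+1); rw [e13] at this
        exact this (f.map_rel_iff.mp h)
      have d24 : f (j+1) ≠ f (j+3) := by
        intro h
        have := (cne (j+1)).symm; rw [e13] at this
        exact this (f.injective h)
      exact absurd (p5_aux hab hj1 h23 h34 (hana _ ⟨j+1, rfl⟩) (hana _ ⟨j+2, rfl⟩)
        (hana _ ⟨j+3, rfl⟩) n2 n3 n24
        (fun h => har ⟨j+1, h.symm⟩) (fun h => har ⟨j+2, h.symm⟩)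
        (fun h => har ⟨j+3, h.symm⟩)
        (fun h => hbr ⟨j+2, h.symm⟩) (fun h => hbr ⟨j+3, h.symm⟩) d24) hP5
    -- b must be adjacent to a neighbor of f i on the cycle
    have hB : G.Adj b (f (i - 1)) ∨ G.Adj b (f (i + 1)) := by
      by_contra hc
      push_neg at hc
      obtain ⟨h1, h2⟩ := hc
      have e1 : i - 1 + 1 = i := by ring
      have e2 : i - 1 + 2 = i + 1 := by ring
      refine absurd (claw_aux ?_ ?_ ?_ hbu.symm ?_ ?_ h1 h2 ?_) hclaw
      · exact fun h => hbr ⟨i - 1, h.symm⟩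
      · exact fun h => hbr ⟨i + 1, h.symm⟩
      · intro h
        have := (cne (i-1)).symm; rw [e2] at this
        exact this (f.injective h)
      · refine (f.map_rel_iff.mpr ?_).symm
        have := cadj (i-1); rwa [e1] at this
      · exact f.map_rel_iff.mpr (cadj i)
      · intro h
        have := cnon (i-1); rw [e2] at this
        exact this (f.map_rel_iff.mp h)
    rcases hB with h | h
    · have e1 : i - 1 + 1 = i := by ring
      refine pair (i-1) h ?_
      rw [e1]; exact hbu
    · exact pair i hbu h
  have main : ∀ ⦃x y : V⦄, G.Walk x y →
      (y ∈ Set.range ⇑f ∨ ∃ u ∈ Set.range ⇑f, G.Adj y u) →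
      (x ∈ Set.range ⇑f ∨ ∃ u ∈ Set.range ⇑f, G.Adj x u) := by
    intro x y p
    induction p with
    | nil => exact fun h => h
    | cons h p ih => exact fun hy => key _ _ h (ih hy)
  intro v
  obtain ⟨p⟩ := hconn.preconnected v (f 0)
  exact main p (Or.inl ⟨0, rfl⟩)
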